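/- Let Σ* be an N×N block-equicorrelation matrix built from a K×K symmetric positive definite core Σ^co and a partition G_1,…,G_K of [N] (i.e. Σ*_{ij} = Σ^co_{kl} whenever i ∈ G_k and j ∈ G_l). Then the optimization problem of minimizing (1/2)‖w‖_2^2 over (w,γ) ∈ R^{N+1} subject to w'1_N = 1 and Σ* w + γ 1_N = 0 has a solution w* that is constant within each group: w*_i = b*_{0k}/N for i ∈ G_k, where, with r_k = |G_k|/N, b*_{0k} = r_k^{-1} · ((Σ^co)^{-1} 1_K)_k / (1_K' (Σ^co)^{-1} 1_K). -/

import Mathlib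

open scoped BigOperators
open Matrix

theorem stmt10 {N K : ℕ} (hN : 0 < N) (g : Fin N → Fin K)
    (hsurj : Function.Surjective g)
    (Sco : Matrix (Fin K) (Fin K) ℝ) (hco : Sco.PosDef)
    (Sstar : Matrix (Fin N) (Fin N) ℝ)
    (hblock : ∀ i j, Sstar i j = Sco (g i) (g j)) :
    let onesN : Fin N → ℝ := fun _ => 1
    let onesK : Fin K → ℝ := fun _ => 1
    let r : Fin K → ℝ := fun k => ((Finset.univ.filter (fun i => g i = k)).card : ℝ) / (N : ℝ)
    let b : Fin K → ℝ := fun k =>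
      (r k)⁻¹ * ((Sco⁻¹.mulVec onesK) k / (onesK ⬝ᵥ Sco⁻¹.mulVec onesK))
    let w : Fin N → ℝ := fun i => b (g i) / (N : ℝ)
    ∃ γ : ℝ,
      ((∑ i, w i) = 1 ∧ Sstar.mulVec w + γ • onesN = 0) ∧
      ∀ (v : Fin N → ℝ) (γ' : ℝ),
        ((∑ i, v i) = 1 ∧ Sstar.mulVec v + γ' • onesN = 0) →
        (1/2) * ∑ i, (w i)^2 ≤ (1/2) * ∑ i, (v i)^2 := by
  intro onesN onesK r b w
  classical
  set x : Fin K → ℝ := Sco⁻¹ *ᵥ onesK with hxdef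
  set c : ℝ := onesK ⬝ᵥ x with hcdef
  have honesK : onesK ≠ 0 := by
    intro h
    have hk : Fin K := g ⟨0, hN⟩
    have := congrFun h hk
    simp [onesK] at this
  have hinv : Sco⁻¹.PosDef := hco.inv
  have hcpos : 0 < c := by
    have := hinv.dotProduct_mulVec_pos honesK
    simpa [hcdef, hxdef] using this
  have hdet : IsUnit Sco.det := hco.det_pos.ne'.isUnit
  have hSx : Sco *ᵥ x = onesK := by
    rw [hxdef, mulVec_mulVec, Matrix.mul_nonsing_inv _ hdet, one_mulVec]
  have hsumx : ∑ k, x k = c := by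
    simp [hcdef, dotProduct, onesK]
  -- fiber cards
  set n : Fin K → ℝ := fun k => ((Finset.univ.filter (fun i => g i = k)).card : ℝ) with hndef
  have hnpos : ∀ k, 0 < n k := by
    intro k
    obtain ⟨i, hi⟩ := hsurj k
    have : i ∈ Finset.univ.filter (fun i => g i = k) := by simp [hi]
    have h := Finset.card_pos.2 ⟨i, this⟩
    simp only [hndef]
    exact_mod_cast h
  have hNpos : (0 : ℝ) < (N : ℝ) := by exact_mod_cast hN
  -- value of w
  have hw : ∀ i, w i = x (g i) / (c * n (g i)) := by
    intro i
    show b (g i) / (N : ℝ) = _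
    have hb : b (g i) = (n (g i) / (N : ℝ))⁻¹ * (x (g i) / c) := rfl
    have hN0 : (N:ℝ) ≠ 0 := hNpos.ne'
    have hn0 : n (g i) ≠ 0 := (hnpos (g i)).ne'
    have hc0 : c ≠ 0 := hcpos.ne'
    rw [hb]
    field_simp
  -- group sums of w
  have hwsum : ∀ k, ∑ i ∈ Finset.univ.filter (fun i => g i = k), w i = x k / c := by
    intro k
    have : ∀ i ∈ Finset.univ.filter (fun i => g i = k), w i = x k / (c * n k) := by
      intro i hi
      rw [hw i]
      simp only [Finset.mem_filter] at hi
      rw [hi.2]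
    rw [Finset.sum_congr rfl this, Finset.sum_const, nsmul_eq_mul]
    have hn0 : n k ≠ 0 := (hnpos k).ne'
    have hc0 : c ≠ 0 := hcpos.ne'
    have hcard : ((Finset.univ.filter (fun i => g i = k)).card : ℝ) = n k := rfl
    rw [hcard]
    field_simp
  have hsum1 : ∑ i, w i = 1 := by
    rw [← Finset.sum_fiberwise Finset.univ g w]
    rw [Finset.sum_congr rfl fun k _ => hwsum k, ← Finset.sum_div, hsumx,
      div_self hcpos.ne']
  -- Sstar *ᵥ w is constant 1/c
  have hmul : ∀ i, (Sstar *ᵥ w) i = 1 / c := by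
    intro i
    have : (Sstar *ᵥ w) i = ∑ j, Sco (g i) (g j) * w j := by
      simp [mulVec, dotProduct, hblock]
    rw [this, ← Finset.sum_fiberwise Finset.univ g (fun j => Sco (g i) (g j) * w j)]
    have hfib : ∀ l, ∑ j ∈ Finset.univ.filter (fun j => g j = l),
        Sco (g i) (g j) * w j = Sco (g i) l * (x l / c) := by
      intro l
      rw [← hwsum l, Finset.mul_sum]
      refine Finset.sum_congr rfl fun j hj => ?_
      simp only [Finset.mem_filter] at hj
      rw [hj.2]
    rw [Finset.sum_congr rfl fun l _ => hfib l]
    have : ∑ l, Sco (g i) l * (x l / c) = (Sco *ᵥ x) (g i) / c := by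
      simp [mulVec, dotProduct, Finset.sum_div, mul_div_assoc]
    rw [this, hSx]
  refine ⟨-(1/c), ⟨hsum1, ?_⟩, ?_⟩
  · funext i
    simp [hmul i, onesN]
  · rintro v γ' ⟨hv1, hv2⟩
    -- group sums of v
    set s : Fin K → ℝ := fun k => ∑ i ∈ Finset.univ.filter (fun i => g i = k), v i with hsdef
    have hSs : Sco *ᵥ s = (-γ') • onesK := by
      funext k
      obtain ⟨i, hi⟩ := hsurj k
      have h2 := congrFun hv2 i
      simp only [Pi.add_apply, Pi.smul_apply, Pi.zero_apply, smul_eq_mul, onesN,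
        mul_one] at h2
      have hvi : (Sstar *ᵥ v) i = (Sco *ᵥ s) k := by
        have e1 : (Sstar *ᵥ v) i = ∑ j, Sco k (g j) * v j := by
          simp [mulVec, dotProduct, hblock, hi]
        rw [e1, ← Finset.sum_fiberwise Finset.univ g (fun j => Sco k (g j) * v j)]
        have : ∀ l, ∑ j ∈ Finset.univ.filter (fun j => g j = l),
            Sco k (g j) * v j = Sco k l * s l := by
          intro l
          rw [hsdef, Finset.mul_sum]
          refine Finset.sum_congr rfl fun j hj => ?_
          simp only [Finset.mem_filter] at hj
          rw [hj.2]
        rw [Finset.sum_congr rfl fun l _ => this l]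
        simp [mulVec, dotProduct]
      rw [hvi] at h2
      have : (Sco *ᵥ s) k = -γ' := by linarith
      simpa [onesK] using this
    have hs : s = (-γ') • x := by
      have h1 : Sco⁻¹ *ᵥ (Sco *ᵥ s) = s := by
        rw [mulVec_mulVec, Matrix.nonsing_inv_mul _ hdet, one_mulVec]
      rw [← h1, hSs, mulVec_smul, hxdef]
    have hsums : ∑ k, s k = 1 := by
      rw [hsdef]
      rw [Finset.sum_fiberwise Finset.univ g v]
      exact hv1
    have hγ' : -γ' = 1 / c := by
      have h : ∑ k, s k = (-γ') * c := by
        simp only [hs, Pi.smul_apply, smul_eq_mul, ← Finset.mul_sum, hsumx]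
      rw [hsums] at h
      field_simp
      linarith
    have hsk : ∀ k, s k = x k / c := by
      intro k
      rw [hs, Pi.smul_apply, smul_eq_mul, hγ']
      ring
    -- sum of squares comparison
    have hwsq : ∑ i, (w i)^2 = ∑ k, (s k)^2 / n k := by
      rw [← Finset.sum_fiberwise Finset.univ g (fun i => (w i)^2)]
      refine Finset.sum_congr rfl fun k _ => ?_
      have : ∀ i ∈ Finset.univ.filter (fun i => g i = k),
          (w i)^2 = (x k / (c * n k))^2 := by
        intro i hi
        simp only [Finset.mem_filter] at hi
        rw [hw i, hi.2]
      rw [Finset.sum_congr rfl this, Finset.sum_const, nsmul_eq_mul, hsk k]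
      have hn0 : n k ≠ 0 := (hnpos k).ne'
      have hc0 : c ≠ 0 := hcpos.ne'
      have hcard : ((Finset.univ.filter (fun i => g i = k)).card : ℝ) = n k := rfl
      rw [hcard]
      field_simp
    have hvsq : ∑ k, (s k)^2 / n k ≤ ∑ i, (v i)^2 := by
      rw [← Finset.sum_fiberwise Finset.univ g (fun i => (v i)^2)]
      refine Finset.sum_le_sum fun k _ => ?_
      have hcs := sq_sum_le_card_mul_sum_sq
        (s := Finset.univ.filter (fun i => g i = k)) (f := v)
      rw [div_le_iff₀ (hnpos k)]
      calc (s k)^2 ≤ ((Finset.univ.filter (fun i => g i = k)).card : ℝ)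
            * ∑ i ∈ Finset.univ.filter (fun i => g i = k), (v i)^2 := by
              exact_mod_cast hcs
        _ = (∑ i ∈ Finset.univ.filter (fun i => g i = k), (v i)^2) * n k := by
              rw [hndef]; ring
    rw [hwsq]
    have h2 : (0:ℝ) < 1/2 := by norm_num
    linarith [hvsq]
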